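/- arXiv:2502.01397 — 5 statements merged into one kernel-verified Lean document; each statement's English description precedes it below -/
import Mathlib

section
/- Define a real sequence by d₁ = 2 and d_i = 1 + 1/i² − 1/(d_{i−1}(i−1)²) for i ≥ 2. Then the sequence is well defined with d_i > 0 for all i; moreover 1 − 1/i ≤ d_i < 1 for all i ≥ 2, and consequently d_i → 1 as i → ∞. -/
/-- The sequence defined by `d₁ = 2` and
`d_i = 1 + 1/i² - 1/(d_{i-1}·(i-1)²)` for `i ≥ 2` is well defined with `d_i > 0`
for all `i ≥ 1`; moreover `1 - 1/i ≤ d_i < 1` for all `i ≥ 2`, and consequently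
`d_i → 1` as `i → ∞`. -/
theorem stmt_4 (d : ℕ → ℝ) (h1 : d 1 = 2)
    (hrec : ∀ i : ℕ, 2 ≤ i →
      d i = 1 + 1 / (i : ℝ) ^ 2 - 1 / (d (i - 1) * ((i : ℝ) - 1) ^ 2)) :
    (∀ i : ℕ, 1 ≤ i → 0 < d i) ∧
    (∀ i : ℕ, 2 ≤ i → 1 - 1 / (i : ℝ) ≤ d i ∧ d i < 1) ∧
    Filter.Tendsto d Filter.atTop (nhds 1) := by
  -- Key invariant: for i ≥ 2, 1 - 1/i + 1/i² ≤ d i < 1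
  have key : ∀ n : ℕ, 2 ≤ n →
      1 - 1 / (n : ℝ) + 1 / (n : ℝ) ^ 2 ≤ d n ∧ d n < 1 := by
    intro n hn
    induction n, hn using Nat.le_induction with
    | base =>
      have h2 := hrec 2 (le_refl 2)
      norm_num [h1] at h2
      norm_num [h2]
    | succ n hn ih =>
      have hN : (2 : ℝ) ≤ (n : ℝ) := by exact_mod_cast hn
      set N : ℝ := (n : ℝ) with hNdef
      have hN0 : (0 : ℝ) < N := by linarith
      obtain ⟨hx1, hx2⟩ := ih
      set x : ℝ := d n with hxdef
      have hinv : 1 / N ≤ 1 / 2 := by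
        apply one_div_le_one_div_of_le <;> norm_num [hN]
      have hsq : (0 : ℝ) < 1 / N ^ 2 := by positivity
      have hx0 : 0 < x := by linarith
      have hrw := hrec (n + 1) (by omega)
      simp only [Nat.add_sub_cancel] at hrw
      push_cast at hrw
      have hsub : ((N : ℝ) + 1) - 1 = N := by ring
      rw [hsub] at hrw
      -- x * N^2 ≥ N^2 - N + 1 ≥ N + 1
      have hlb : N + 1 ≤ x * N ^ 2 := by
        have h1' : (1 - 1 / N + 1 / N ^ 2) * N ^ 2 = N ^ 2 - N + 1 := by
          field_simp
        have h2' : (1 - 1 / N + 1 / N ^ 2) * N ^ 2 ≤ x * N ^ 2 := by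
          apply mul_le_mul_of_nonneg_right hx1 (by positivity)
        nlinarith
      have hub : x * N ^ 2 < (N + 1) ^ 2 := by nlinarith
      have hd0 : (0 : ℝ) < x * N ^ 2 := by positivity
      constructor
      · -- lower bound
        have : 1 / (x * N ^ 2) ≤ 1 / (N + 1) :=
          one_div_le_one_div_of_le (by linarith) hlb
        rw [hrw]; push_cast; linarith
      · -- upper bound
        have : 1 / ((N + 1) ^ 2) < 1 / (x * N ^ 2) :=
          one_div_lt_one_div_of_lt hd0 hub
        rw [hrw]; linarith
  refine ⟨?_, ?_, ?_⟩
  · intro i hi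
    rcases eq_or_lt_of_le hi with h | h
    · rw [← h, h1]; norm_num
    · have hi2 : 2 ≤ i := h
      obtain ⟨hl, _⟩ := key i hi2
      have hN : (2 : ℝ) ≤ (i : ℝ) := by exact_mod_cast hi2
      have hinv : 1 / (i : ℝ) ≤ 1 / 2 := by
        apply one_div_le_one_div_of_le <;> norm_num [hN]
      have : (0 : ℝ) < 1 / (i : ℝ) ^ 2 := by positivity
      linarith
  · intro i hi
    obtain ⟨hl, hu⟩ := key i hi
    have : (0 : ℝ) < 1 / (i : ℝ) ^ 2 := by positivity
    exact ⟨by linarith, hu⟩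
  · have hlow : Filter.Tendsto (fun i : ℕ => 1 - 1 / (i : ℝ)) Filter.atTop (nhds 1) := by
      have h1t : Filter.Tendsto (fun _ : ℕ => (1:ℝ)) Filter.atTop (nhds 1) :=
        tendsto_const_nhds
      simpa using h1t.sub tendsto_one_div_atTop_nhds_zero_nat
    apply tendsto_of_tendsto_of_tendsto_of_le_of_le' hlow
      (tendsto_const_nhds : Filter.Tendsto (fun _ : ℕ => (1:ℝ)) Filter.atTop (nhds 1))
    · filter_upwards [Filter.eventually_atTop.2 ⟨2, fun i hi => hi⟩] with i hi
      obtain ⟨hl, _⟩ := key i hi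
      have : (0 : ℝ) < 1 / (i : ℝ) ^ 2 := by positivity
      linarith
    · filter_upwards [Filter.eventually_atTop.2 ⟨2, fun i hi => hi⟩] with i hi
      exact (key i hi).2.le
end

section
/- For each n ≥ 1 let A be the n×n symmetric positive definite tridiagonal matrix with A_{11} = 1, A_{ii} = 1 + 1/i² for i ≥ 2, A_{i+1,i} = A_{i,i+1} = 1/i, and let A′ = A + e₁e₁ᵀ, so that A′ − A has exactly one nonzero entry. Let L and L′ be the lower bidiagonal Cholesky factors of A and A′ with positive diagonals. Then for every ε ∈ (0,1) there exists an index N, independent of n, such that |L′_{ii} − L_{ii}| > 1 − ε for all n and all i with N ≤ i ≤ n. In particular, perturbing a single entry of A changes all but finitely many diagonal entries of the Cholesky factor by an amount bounded below by a positive constant: the map A ↦ L is not local. -/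
open Matrix

/-- The `n × n` tridiagonal SPD matrix with `A_{11} = 1`, `A_{ii} = 1 + 1/i²` for `i ≥ 2`,
and `A_{i+1,i} = A_{i,i+1} = 1/i` (1-based indexing). -/
noncomputable def triA (n : ℕ) : Matrix (Fin n) (Fin n) ℝ :=
  Matrix.of fun i j =>
    if i = j then (if i.val = 0 then 1 else 1 + 1 / ((i.val : ℝ) + 1) ^ 2)
    else if i.val = j.val + 1 then 1 / ((j.val : ℝ) + 1)
    else if j.val = i.val + 1 then 1 / ((i.val : ℝ) + 1)
    else 0

/-- `A' = A + e₁e₁ᵀ`: the rank-one perturbation of `triA n` in the `(1,1)` entry, so that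
`A' - A` has exactly one nonzero entry. -/
noncomputable def triA' (n : ℕ) : Matrix (Fin n) (Fin n) ℝ :=
  triA n + Matrix.of fun i j => if i.val = 0 ∧ j.val = 0 then (1 : ℝ) else 0

/-- The squared diagonal of the Cholesky factor of `triA'` (0-based). -/
noncomputable def gseq : ℕ → ℝ
  | 0 => 2
  | (k+1) => 1 + 1/((k:ℝ)+2)^2 - 1/(((k:ℝ)+1)^2 * gseq k)

lemma gseq_ge (k : ℕ) : ((k:ℝ)+1)/((k:ℝ)+2) ≤ gseq k := by
  induction k with
  | zero => norm_num [gseq]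
  | succ k ih =>
    rcases Nat.lt_or_ge k 2 with hk | hk
    · interval_cases k
      · norm_num [gseq]
      · norm_num [gseq]
    · have hc : (2:ℝ) ≤ (k:ℝ) := by exact_mod_cast hk
      set c := (k:ℝ) with hcdef
      have hgpos : 0 < gseq k := lt_of_lt_of_le (by positivity) ih
      have hg' : c + 1 ≤ gseq k * (c + 2) := (div_le_iff₀ (by positivity)).mp ih
      have h1 : 1/((c+1)^2 * gseq k) ≤ 1/(c+3) := by
        rw [div_le_div_iff₀ (by positivity) (by positivity)]
        nlinarith [hg', hgpos, sq_nonneg (c+1), mul_pos hgpos (by positivity : (0:ℝ) < (c+2))]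
      have heq : gseq (k+1) = 1 + 1/(c+2)^2 - 1/((c+1)^2 * gseq k) := rfl
      have hgoal : ((k:ℝ)+1+1)/((k:ℝ)+1+2) ≤ gseq (k+1) := by
        rw [heq]
        have h2 : (c+1+1)/(c+1+2) = 1 - 1/(c+3) := by
          field_simp
          ring
        rw [h2]
        have h3 : 0 ≤ 1/(c+2)^2 := by positivity
        linarith
      push_cast
      exact_mod_cast hgoal

lemma gseq_pos (k : ℕ) : 0 < gseq k :=
  lt_of_lt_of_le (by positivity) (gseq_ge k)

lemma mulT_apply {n : ℕ} (L : Matrix (Fin n) (Fin n) ℝ) (i j : Fin n) :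
    (L * Lᵀ) i j = ∑ k, L i k * L j k := by
  simp [Matrix.mul_apply, Matrix.transpose_apply]

lemma bi_off {n : ℕ} (L : Matrix (Fin n) (Fin n) ℝ)
    (hL : ∀ i j : Fin n, i.val ≠ j.val → i.val ≠ j.val + 1 → L i j = 0)
    (i j : Fin n) (hij : i.val = j.val + 1) :
    (L * Lᵀ) i j = L i j * L j j := by
  rw [mulT_apply]
  apply Finset.sum_eq_single_of_mem j (Finset.mem_univ j)
  intro k _ hk
  by_cases hki : k = i
  · subst hki
    rw [hL j k (by omega) (by omega), mul_zero]
  · rw [hL i k ?_ ?_, zero_mul]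
    · intro h; exact hki (Fin.ext h.symm)
    · intro h; exact hk (Fin.ext (by omega))

lemma bi_diag {n : ℕ} (L : Matrix (Fin n) (Fin n) ℝ)
    (hL : ∀ i j : Fin n, i.val ≠ j.val → i.val ≠ j.val + 1 → L i j = 0)
    (i j : Fin n) (hij : i.val = j.val + 1) :
    (L * Lᵀ) i i = L i i ^ 2 + L i j ^ 2 := by
  rw [mulT_apply]
  have hne : i ≠ j := by intro h; rw [h] at hij; omega
  have hsub : ∑ k ∈ ({i, j} : Finset (Fin n)), L i k * L i k = ∑ k, L i k * L i k := by
    apply Finset.sum_subset (Finset.subset_univ _)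
    intro x _ hx
    simp only [Finset.mem_insert, Finset.mem_singleton, not_or] at hx
    rw [hL i x ?_ ?_, zero_mul]
    · intro h; exact hx.1 (Fin.ext h.symm)
    · intro h; exact hx.2 (Fin.ext (by omega))
  rw [← hsub, Finset.sum_pair hne]
  ring

lemma bi_diag0 {n : ℕ} (L : Matrix (Fin n) (Fin n) ℝ)
    (hL : ∀ i j : Fin n, i.val ≠ j.val → i.val ≠ j.val + 1 → L i j = 0)
    (i : Fin n) (hi : i.val = 0) :
    (L * Lᵀ) i i = L i i ^ 2 := by
  rw [mulT_apply]
  rw [show L i i ^ 2 = L i i * L i i from sq (L i i) ▸ rfl]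
  apply Finset.sum_eq_single_of_mem i (Finset.mem_univ i)
  intro k _ hk
  rw [hL i k ?_ ?_, zero_mul]
  · intro h; exact hk (Fin.ext h.symm)
  · omega

theorem stmt_5 (ε : ℝ) (hε0 : 0 < ε) (hε1 : ε < 1) :
    ∃ N : ℕ, ∀ (n : ℕ) (L L' : Matrix (Fin n) (Fin n) ℝ),
      (∀ i j : Fin n, i.val ≠ j.val → i.val ≠ j.val + 1 → L i j = 0) →
      (∀ i : Fin n, 0 < L i i) → triA n = L * Lᵀ →
      (∀ i j : Fin n, i.val ≠ j.val → i.val ≠ j.val + 1 → L' i j = 0) →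
      (∀ i : Fin n, 0 < L' i i) → triA' n = L' * L'ᵀ →
      ∀ i : Fin n, N ≤ i.val + 1 → 1 - ε < |L' i i - L i i| := by
  refine ⟨⌈2/ε⌉₊ + 1, ?_⟩
  intro n L L' hL hLpos hA hL' hL'pos hA' i hNi
  -- key induction: L i i = 1/(i+1), L' i i = sqrt (gseq i)
  have key : ∀ m : ℕ, ∀ i : Fin n, i.val = m →
      L i i = 1/((m:ℝ)+1) ∧ L' i i = Real.sqrt (gseq m) := by
    intro m
    induction m with
    | zero =>
      intro i hi
      constructor
      · have h1 : (triA n) i i = 1 := by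
          simp [triA, hi]
        rw [hA, bi_diag0 L hL i hi] at h1
        have := (hLpos i).le
        norm_num
        calc L i i = Real.sqrt (L i i ^ 2) := (Real.sqrt_sq this).symm
          _ = 1 := by rw [h1, Real.sqrt_one]
      · have h1 : (triA' n) i i = 2 := by
          simp [triA', triA, hi]
          norm_num
        rw [hA', bi_diag0 L' hL' i hi] at h1
        have := (hL'pos i).le
        rw [show gseq 0 = 2 from rfl]
        calc L' i i = Real.sqrt (L' i i ^ 2) := (Real.sqrt_sq this).symm
          _ = Real.sqrt 2 := by rw [h1]
      | succ m ih =>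
      intro i hi
      have hmn : m < n := by omega
      set j : Fin n := ⟨m, hmn⟩ with hjdef
      have hij : i.val = j.val + 1 := by simp [hjdef, hi]
      have hine : i ≠ j := by intro h; rw [h] at hij; omega
      obtain ⟨ihL, ihL'⟩ := ih j rfl
      -- matrix entries
      have hAij : (triA n) i j = 1/((m:ℝ)+1) := by
        simp [triA, hine, hij]
        rfl
      have hAii : (triA n) i i = 1 + 1/((m:ℝ)+2)^2 := by
        have : i.val ≠ 0 := by omega
        simp [triA, this, hi]
        push_cast
        ring_nf
      have hA'ij : (triA' n) i j = 1/((m:ℝ)+1) := by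
        have : i.val ≠ 0 := by omega
        simp [triA', triA, hine, hij, this]
        rfl
      have hA'ii : (triA' n) i i = 1 + 1/((m:ℝ)+2)^2 := by
        have h0 : i.val ≠ 0 := by omega
        simp [triA', triA, h0, hi]
        push_cast
        ring_nf
      constructor
      · -- L part
        have h1 : (triA n) i j = L i j * L j j := hA ▸ bi_off L hL i j hij
        have h2 : (triA n) i i = L i i ^ 2 + L i j ^ 2 := hA ▸ bi_diag L hL i j hij
        rw [hAij, ihL] at h1
        have hm1 : (0:ℝ) < (m:ℝ) + 1 := by positivity
        have hLij : L i j = 1 := by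
          field_simp at h1
          linarith
        rw [hAii, hLij] at h2
        have hsq : L i i ^ 2 = (1/((m:ℝ)+2))^2 := by
          rw [div_pow]
          norm_num at h2 ⊢
          linarith
        have hpos := (hLpos i).le
        have hfin : L i i = 1/((m:ℝ)+2) := by
          calc L i i = Real.sqrt (L i i ^ 2) := (Real.sqrt_sq hpos).symm
            _ = 1/((m:ℝ)+2) := by rw [hsq, Real.sqrt_sq (by positivity)]
        rw [hfin]; push_cast; ring
      · -- L' part
        have h1 : (triA' n) i j = L' i j * L' j j := hA' ▸ bi_off L' hL' i j hij
        have h2 : (triA' n) i i = L' i i ^ 2 + L' i j ^ 2 := hA' ▸ bi_diag L' hL' i j hij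
        rw [hA'ij, ihL'] at h1
        have hgpos : 0 < gseq m := gseq_pos m
        have hspos : 0 < Real.sqrt (gseq m) := Real.sqrt_pos.mpr hgpos
        have hLij : L' i j = (1/((m:ℝ)+1)) / Real.sqrt (gseq m) := by
          field_simp at h1 ⊢
          linarith
        have hLijsq : L' i j ^ 2 = 1/(((m:ℝ)+1)^2 * gseq m) := by
          rw [hLij, div_pow, Real.sq_sqrt hgpos.le, div_pow, one_pow, div_div]
        rw [hA'ii, hLijsq] at h2
        have hsq : L' i i ^ 2 = gseq (m+1) := by
          rw [show gseq (m+1) = 1 + 1/((m:ℝ)+2)^2 - 1/(((m:ℝ)+1)^2 * gseq m) from rfl]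
          linarith
        have := (hL'pos i).le
        calc L' i i = Real.sqrt (L' i i ^ 2) := (Real.sqrt_sq this).symm
          _ = Real.sqrt (gseq (m+1)) := by rw [hsq]
  -- final estimate
  obtain ⟨hLi, hL'i⟩ := key i.val i rfl
  set m : ℕ := i.val with hm
  have hmN : (⌈2/ε⌉₊ : ℝ) + 1 ≤ (m:ℝ) + 1 := by
    have : ⌈2/ε⌉₊ + 1 ≤ m + 1 := hNi
    exact_mod_cast this
  have hceil : 2/ε ≤ (⌈2/ε⌉₊ : ℝ) := Nat.le_ceil _
  have hm2 : 2/ε < (m:ℝ) + 1 := by linarith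
  have hm1pos : (0:ℝ) < (m:ℝ) + 1 := by positivity
  have heps : 2/((m:ℝ)+1) < ε := by
    rw [div_lt_iff₀ hm1pos]
    rw [div_lt_iff₀ hε0] at hm2
    linarith
  -- sqrt (gseq m) ≥ (m+1)/(m+2)
  have hx01 : (0:ℝ) ≤ ((m:ℝ)+1)/((m:ℝ)+2) := by positivity
  have hx1 : ((m:ℝ)+1)/((m:ℝ)+2) ≤ 1 := by
    rw [div_le_one (by positivity)]; linarith
  have hsqrt1 : ((m:ℝ)+1)/((m:ℝ)+2) ≤ Real.sqrt (((m:ℝ)+1)/((m:ℝ)+2)) := by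
    nlinarith [Real.sq_sqrt hx01, Real.sqrt_nonneg (((m:ℝ)+1)/((m:ℝ)+2)), hx1]
  have hsqrt2 : Real.sqrt (((m:ℝ)+1)/((m:ℝ)+2)) ≤ Real.sqrt (gseq m) := by
    apply Real.sqrt_le_sqrt
    exact gseq_ge m
  have hbound : 1 - 2/((m:ℝ)+1) ≤ L' i i - L i i := by
    rw [hLi, hL'i]
    have h5 : 1 - 1/((m:ℝ)+2) = ((m:ℝ)+1)/((m:ℝ)+2) := by
      field_simp
      ring
    have h6 : 1/((m:ℝ)+2) ≤ 1/((m:ℝ)+1) := by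
      apply one_div_le_one_div_of_le (by positivity) (by linarith)
    have h7 : ((m:ℝ)+1)/((m:ℝ)+2) ≤ Real.sqrt (gseq m) := le_trans hsqrt1 hsqrt2
    have h8 : 1 - 1/((m:ℝ)+2) ≤ Real.sqrt (gseq m) := by rw [h5]; exact h7
    have h9 : 2/((m:ℝ)+1) = 1/((m:ℝ)+1) + 1/((m:ℝ)+1) := by ring
    linarith
  calc 1 - ε < 1 - 2/((m:ℝ)+1) := by linarith
    _ ≤ L' i i - L i i := hbound
    _ ≤ |L' i i - L i i| := le_abs_self _
end

section
/- With A, A′, L, L′ as follows: A is the n×n symmetric positive definite tridiagonal matrix with A_{11} = 1, A_{ii} = 1 + 1/i² for i ≥ 2, A_{i+1,i} = A_{i,i+1} = 1/i; A′ = A + e₁e₁ᵀ; and L, L′ are the respective lower bidiagonal Cholesky factors with positive diagonals. Then the subdiagonal entries satisfy L_{i,i−1} = 1 for all i ≥ 2, while L′_{i,i−1} = (1/(i−1))/√(d_{i−1}) → 0 as i → ∞ (where d_i = (L′_{ii})²); hence |L′_{i,i−1} − L_{i,i−1}| → 1 as i → ∞. -/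
open Matrix

namespace Stmt6Aux

lemma sq_eq_of_pos {x y : ℝ} (hx : 0 < x) (hy : 0 < y) (h : x ^ 2 = y ^ 2) : x = y := by
  have h1 : x = Real.sqrt (x ^ 2) := (Real.sqrt_sq hx.le).symm
  rw [h1, h, Real.sqrt_sq hy.le]

/-- `b k = 1 + ∑_{j=1}^k (j!)²`. -/
noncomputable def bseq : ℕ → ℝ
  | 0 => 1
  | k + 1 => bseq k + ((k + 1).factorial : ℝ) ^ 2

lemma bseq_pos : ∀ k, 0 < bseq k := by
  intro k
  induction k with
  | zero => norm_num [bseq]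
  | succ k ih =>
    have h : (0 : ℝ) < ((k + 1).factorial : ℝ) ^ 2 := by positivity
    rw [bseq]; linarith

lemma bseq_le : ∀ k, bseq k ≤ ((k : ℝ) + 1) * ((k.factorial : ℝ)) ^ 2 := by
  intro k
  induction k with
  | zero => norm_num [bseq]
  | succ k ih =>
    have hfact : (((k + 1).factorial : ℝ)) = ((k : ℝ) + 1) * (k.factorial : ℝ) := by
      rw [Nat.factorial_succ]; push_cast; ring
    have hk0 : (0 : ℝ) ≤ (k : ℝ) := Nat.cast_nonneg k
    have hf0 : (0 : ℝ) ≤ (k.factorial : ℝ) ^ 2 := by positivity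
    rw [bseq, hfact]
    push_cast
    nlinarith [ih, hk0, hf0, mul_nonneg hk0 hf0, mul_nonneg (mul_nonneg hk0 hk0) hf0,
      mul_nonneg (mul_nonneg (mul_nonneg hk0 hk0) hk0) hf0]

/-- `(k+1)·b k ≤ b (k+1)`. -/
lemma bseq_growth (k : ℕ) : ((k : ℝ) + 1) * bseq k ≤ bseq (k + 1) := by
  have hfact : (((k + 1).factorial : ℝ)) = ((k : ℝ) + 1) * (k.factorial : ℝ) := by
    rw [Nat.factorial_succ]; push_cast; ring
  have hle := bseq_le k
  have hk0 : (0 : ℝ) ≤ (k : ℝ) := Nat.cast_nonneg k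
  rw [show bseq (k + 1) = bseq k + ((k + 1).factorial : ℝ) ^ 2 from rfl, hfact]
  nlinarith [bseq_pos k]

section Bidiag

variable {n : ℕ} (L : Matrix (Fin n) (Fin n) ℝ)
  (hbd : ∀ i j : Fin n, i.val ≠ j.val → i.val ≠ j.val + 1 → L i j = 0)

include hbd

lemma offdiag_entry (i j : Fin n) (hij : i.val = j.val + 1) :
    (L * Lᵀ) i j = L i j * L j j := by
  rw [mul_apply]
  apply Finset.sum_eq_single j
  · intro k _ hk
    by_cases h : j.val = k.val + 1
    · have : L i k = 0 := hbd i k (by omega) (by omega)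
      simp [this]
    · have hjk : j.val ≠ k.val := fun hh => hk (Fin.ext hh.symm)
      have : L j k = 0 := hbd j k hjk h
      simp [Matrix.transpose_apply, this]
  · intro h; exact absurd (Finset.mem_univ j) h

lemma diag_entry_zero (i : Fin n) (hi : i.val = 0) :
    (L * Lᵀ) i i = L i i ^ 2 := by
  rw [mul_apply]
  rw [Finset.sum_eq_single i]
  · simp [Matrix.transpose_apply, sq]
  · intro k _ hk
    have hik : i.val ≠ k.val := fun hh => hk (Fin.ext hh.symm)
    have : L i k = 0 := hbd i k hik (by omega)
    simp [this]
  · intro h; exact absurd (Finset.mem_univ i) h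

lemma diag_entry_succ (i j : Fin n) (hij : i.val = j.val + 1) :
    (L * Lᵀ) i i = L i i ^ 2 + L i j ^ 2 := by
  have hij' : i ≠ j := by
    intro h; rw [h] at hij; omega
  rw [mul_apply]
  have hsub : ∑ k, L i k * Lᵀ k i = ∑ k ∈ ({i, j} : Finset (Fin n)), L i k * Lᵀ k i := by
    symm
    apply Finset.sum_subset (Finset.subset_univ _)
    intro k _ hk
    simp only [Finset.mem_insert, Finset.mem_singleton, not_or] at hk
    have h1 : i.val ≠ k.val := fun hh => hk.1 (Fin.ext hh.symm)
    have h2 : i.val ≠ k.val + 1 := by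
      intro hh
      exact hk.2 (Fin.ext (by omega)).symm
    have : L i k = 0 := hbd i k h1 h2
    simp [this]
  rw [hsub, Finset.sum_pair hij']
  simp [Matrix.transpose_apply, sq]

end Bidiag

lemma triA_diag_zero {n : ℕ} (i : Fin n) (h : i.val = 0) : triA n i i = 1 := by
  simp [triA, h]

lemma triA_diag_succ {n : ℕ} (i : Fin n) (p : ℕ) (h : i.val = p + 1) :
    triA n i i = 1 + 1 / ((p : ℝ) + 2) ^ 2 := by
  simp only [triA, Matrix.of_apply, if_pos rfl, h]
  norm_num
  push_cast
  ring_nf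

lemma triA_off {n : ℕ} (i j : Fin n) (h : i.val = j.val + 1) :
    triA n i j = 1 / ((j.val : ℝ) + 1) := by
  have hij : i ≠ j := by intro hh; rw [hh] at h; omega
  simp [triA, hij, h]

lemma triA'_diag_zero {n : ℕ} (i : Fin n) (h : i.val = 0) : triA' n i i = 2 := by
  simp [triA', triA_diag_zero i h, h]
  norm_num

lemma triA'_diag_succ {n : ℕ} (i : Fin n) (p : ℕ) (h : i.val = p + 1) :
    triA' n i i = 1 + 1 / ((p : ℝ) + 2) ^ 2 := by
  have hi0 : i.val ≠ 0 := by omega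
  simp [triA', triA_diag_succ i p h, hi0]

lemma triA'_off {n : ℕ} (i j : Fin n) (h : i.val = j.val + 1) :
    triA' n i j = 1 / ((j.val : ℝ) + 1) := by
  have hi0 : i.val ≠ 0 := by omega
  simp [triA', triA_off i j h, hi0]

/-- Diagonal of the Cholesky factor of `triA`: `L j j = 1/(j+1)` (0-based). -/
lemma L_diag {n : ℕ} (L : Matrix (Fin n) (Fin n) ℝ)
    (hbd : ∀ i j : Fin n, i.val ≠ j.val → i.val ≠ j.val + 1 → L i j = 0)
    (hpos : ∀ i : Fin n, 0 < L i i) (hA : triA n = L * Lᵀ) :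
    ∀ p : ℕ, ∀ j : Fin n, j.val = p → L j j = 1 / ((p : ℝ) + 1) := by
  intro p
  induction p with
  | zero =>
    intro j hj
    have h1 : L j j ^ 2 = 1 := by
      rw [← diag_entry_zero L hbd j hj, ← hA, triA_diag_zero j hj]
    have h2 : L j j ^ 2 = (1 : ℝ) ^ 2 := by rw [h1]; norm_num
    have := sq_eq_of_pos (hpos j) one_pos h2
    rw [this]; norm_num
  | succ p ih =>
    intro j hj
    have hpn : p < n := by omega
    set j' : Fin n := ⟨p, hpn⟩ with hj'
    have hjj' : j.val = j'.val + 1 := by simp [hj']; omega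
    have ihv : L j' j' = 1 / ((p : ℝ) + 1) := ih j' rfl
    have hoff : L j j' * L j' j' = 1 / ((p : ℝ) + 1) := by
      rw [← offdiag_entry L hbd j j' hjj', ← hA, triA_off j j' hjj']
    have hp1 : ((p : ℝ) + 1) ≠ 0 := by positivity
    have hsub : L j j' = 1 := by
      rw [ihv] at hoff
      exact mul_right_cancel₀ (one_div_ne_zero hp1) (by rw [hoff, one_mul])
    have hd : L j j ^ 2 + L j j' ^ 2 = 1 + 1 / ((p : ℝ) + 2) ^ 2 := by
      rw [← diag_entry_succ L hbd j j' hjj', ← hA, triA_diag_succ j p hj]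
    rw [hsub] at hd
    have h2 : L j j ^ 2 = (1 / ((p : ℝ) + 2)) ^ 2 := by
      rw [div_pow, one_pow]; linarith
    have hp2 : (0 : ℝ) < 1 / ((p : ℝ) + 2) := by positivity
    have hgoal := sq_eq_of_pos (hpos j) hp2 h2
    rw [hgoal]
    push_cast
    ring

/-- Diagonal of the Cholesky factor of `triA'`:
`(L' j j)² = b (j+1) / ((j+1)² b j)` (0-based `j`). -/
lemma L'_diag {n : ℕ} (L' : Matrix (Fin n) (Fin n) ℝ)
    (hbd : ∀ i j : Fin n, i.val ≠ j.val → i.val ≠ j.val + 1 → L' i j = 0)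
    (hpos : ∀ i : Fin n, 0 < L' i i) (hA : triA' n = L' * L'ᵀ) :
    ∀ p : ℕ, ∀ j : Fin n, j.val = p →
      L' j j ^ 2 = bseq (p + 1) / (((p : ℝ) + 1) ^ 2 * bseq p) := by
  intro p
  induction p with
  | zero =>
    intro j hj
    have h1 : L' j j ^ 2 = 2 := by
      rw [← diag_entry_zero L' hbd j hj, ← hA, triA'_diag_zero j hj]
    rw [h1]
    norm_num [bseq]
  | succ p ih =>
    intro j hj
    have hpn : p < n := by omega
    set j' : Fin n := ⟨p, hpn⟩ with hj'
    have hjj' : j.val = j'.val + 1 := by simp [hj']; omega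
    have ihv : L' j' j' ^ 2 = bseq (p + 1) / (((p : ℝ) + 1) ^ 2 * bseq p) := ih j' rfl
    have hb0 := bseq_pos p
    have hb1 := bseq_pos (p + 1)
    have hb2 := bseq_pos (p + 2)
    have hp1 : (0 : ℝ) < (p : ℝ) + 1 := by positivity
    have hp2 : (0 : ℝ) < (p : ℝ) + 2 := by positivity
    have hoff : L' j j' * L' j' j' = 1 / ((p : ℝ) + 1) := by
      rw [← offdiag_entry L' hbd j j' hjj', ← hA, triA'_off j j' hjj']
    have hne : bseq (p + 1) / (((p : ℝ) + 1) ^ 2 * bseq p) ≠ 0 := by positivity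
    have hsq : L' j j' ^ 2 * (bseq (p + 1) / (((p : ℝ) + 1) ^ 2 * bseq p))
        = (1 / ((p : ℝ) + 1)) ^ 2 := by
      rw [← ihv, ← mul_pow, hoff]
    have hsub : L' j j' ^ 2 = bseq p / bseq (p + 1) := by
      have hX : L' j j' ^ 2
          = (1 / ((p : ℝ) + 1)) ^ 2 / (bseq (p + 1) / (((p : ℝ) + 1) ^ 2 * bseq p)) :=
        (eq_div_iff hne).mpr hsq
      rw [hX]
      field_simp
    have hd : L' j j ^ 2 + L' j j' ^ 2 = 1 + 1 / ((p : ℝ) + 2) ^ 2 := by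
      rw [← diag_entry_succ L' hbd j j' hjj', ← hA, triA'_diag_succ j p hj]
    -- key recursion: b (p+2) = b (p+1) + (p+2)² (b (p+1) - b p)
    have hrec : bseq (p + 2) = bseq (p + 1) + ((p : ℝ) + 2) ^ 2 * (bseq (p + 1) - bseq p) := by
      have h1 : bseq (p + 1) - bseq p = ((p + 1).factorial : ℝ) ^ 2 := by
        rw [show bseq (p + 1) = bseq p + ((p + 1).factorial : ℝ) ^ 2 from rfl]; ring
      have h2 : bseq (p + 2) = bseq (p + 1) + ((p + 2).factorial : ℝ) ^ 2 := rfl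
      have h3 : ((p + 2).factorial : ℝ) = ((p : ℝ) + 2) * ((p + 1).factorial : ℝ) := by
        rw [show p + 2 = (p + 1) + 1 from rfl, Nat.factorial_succ]; push_cast; ring
      rw [h2, h3, h1]; ring
    rw [hsub] at hd
    have goal : L' j j ^ 2 = bseq (p + 2) / (((p : ℝ) + 2) ^ 2 * bseq (p + 1)) := by
      have hLv : L' j j ^ 2 = 1 + 1 / ((p : ℝ) + 2) ^ 2 - bseq p / bseq (p + 1) := by linarith
      rw [hLv, hrec]
      field_simp
      ring
    rw [goal]
    have hc1 : ((p + 1 : ℕ) : ℝ) + 1 = (p : ℝ) + 2 := by push_cast; ring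
    rw [hc1]

/-- The ratio bound used for the limit. -/
lemma ratio_le (m : ℕ) : bseq m / bseq (m + 1) ≤ 1 / ((m : ℝ) + 1) := by
  have hg := bseq_growth m
  have hb0 := bseq_pos m
  have hb1 := bseq_pos (m + 1)
  rw [div_le_div_iff₀ hb1 (by positivity)]
  nlinarith

lemma tendsto_c : Filter.Tendsto (fun k => Real.sqrt (bseq (k - 1) / bseq k))
    Filter.atTop (nhds 0) := by
  have hupper : Filter.Tendsto (fun k : ℕ => Real.sqrt (1 / (k : ℝ)))
      Filter.atTop (nhds 0) := by
    have h1 : Filter.Tendsto (fun k : ℕ => 1 / (k : ℝ)) Filter.atTop (nhds 0) :=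
      tendsto_one_div_atTop_nhds_zero_nat
    simpa using h1.sqrt
  apply tendsto_of_tendsto_of_tendsto_of_le_of_le'
    (tendsto_const_nhds : Filter.Tendsto (fun _ : ℕ => (0 : ℝ)) Filter.atTop (nhds 0))
    hupper
    (Filter.Eventually.of_forall fun k => Real.sqrt_nonneg _)
  filter_upwards [Filter.eventually_ge_atTop 1] with k hk
  obtain ⟨m, rfl⟩ : ∃ m, k = m + 1 := ⟨k - 1, by omega⟩
  have h1 := ratio_le m
  have h2 : (m + 1 : ℕ) - 1 = m := by omega
  rw [h2]
  apply Real.sqrt_le_sqrt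
  push_cast
  exact h1

end Stmt6Aux

open Stmt6Aux in
theorem stmt_6 :
    (∀ (n : ℕ) (L : Matrix (Fin n) (Fin n) ℝ),
      (∀ i j : Fin n, i.val ≠ j.val → i.val ≠ j.val + 1 → L i j = 0) →
      (∀ i : Fin n, 0 < L i i) → triA n = L * Lᵀ →
      ∀ i j : Fin n, i.val = j.val + 1 → L i j = 1) ∧
    (∀ (n : ℕ) (L' : Matrix (Fin n) (Fin n) ℝ),
      (∀ i j : Fin n, i.val ≠ j.val → i.val ≠ j.val + 1 → L' i j = 0) →
      (∀ i : Fin n, 0 < L' i i) → triA' n = L' * L'ᵀ →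
      ∀ i j : Fin n, i.val = j.val + 1 →
        L' i j = (1 / ((j.val : ℝ) + 1)) / Real.sqrt ((L' j j) ^ 2)) ∧
    (∃ c : ℕ → ℝ,
      (∀ (n : ℕ) (L' : Matrix (Fin n) (Fin n) ℝ),
        (∀ i j : Fin n, i.val ≠ j.val → i.val ≠ j.val + 1 → L' i j = 0) →
        (∀ i : Fin n, 0 < L' i i) → triA' n = L' * L'ᵀ →
        ∀ i j : Fin n, i.val = j.val + 1 → L' i j = c i.val) ∧
      Filter.Tendsto c Filter.atTop (nhds 0) ∧
      Filter.Tendsto (fun k => |c k - 1|) Filter.atTop (nhds 1)) := by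
  refine ⟨?_, ?_, ?_⟩
  · -- Part 1
    intro n L hbd hpos hA i j hij
    have hdj : L j j = 1 / ((j.val : ℝ) + 1) := L_diag L hbd hpos hA j.val j rfl
    have hoff : L i j * L j j = 1 / ((j.val : ℝ) + 1) := by
      rw [← offdiag_entry L hbd i j hij, ← hA, triA_off i j hij]
    rw [hdj] at hoff
    have hp1 : ((j.val : ℝ) + 1) ≠ 0 := by positivity
    exact mul_right_cancel₀ (one_div_ne_zero hp1) (by rw [hoff, one_mul])
  · -- Part 2
    intro n L' hbd hpos hA i j hij
    have hoff : L' i j * L' j j = 1 / ((j.val : ℝ) + 1) := by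
      rw [← offdiag_entry L' hbd i j hij, ← hA, triA'_off i j hij]
    rw [Real.sqrt_sq (hpos j).le, eq_div_iff (hpos j).ne']
    exact hoff
  · -- Part 3
    refine ⟨fun k => Real.sqrt (bseq (k - 1) / bseq k), ?_, tendsto_c, ?_⟩
    · intro n L' hbd hpos hA i j hij
      have hoff : L' i j * L' j j = 1 / ((j.val : ℝ) + 1) := by
        rw [← offdiag_entry L' hbd i j hij, ← hA, triA'_off i j hij]
      have hdj : L' j j ^ 2 = bseq (j.val + 1) / (((j.val : ℝ) + 1) ^ 2 * bseq j.val) :=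
        L'_diag L' hbd hpos hA j.val j rfl
      have hb0 := bseq_pos j.val
      have hb1 := bseq_pos (j.val + 1)
      have hp1 : (0 : ℝ) < (j.val : ℝ) + 1 := by positivity
      have hLpos : 0 < L' i j := by
        have hj := hpos j
        have h1 : (0 : ℝ) < 1 / ((j.val : ℝ) + 1) := by positivity
        nlinarith [hoff]
      have hne : bseq (j.val + 1) / (((j.val : ℝ) + 1) ^ 2 * bseq j.val) ≠ 0 := by positivity
      have hsq : L' i j ^ 2 * (bseq (j.val + 1) / (((j.val : ℝ) + 1) ^ 2 * bseq j.val))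
          = (1 / ((j.val : ℝ) + 1)) ^ 2 := by
        rw [← hdj, ← mul_pow, hoff]
      have hLsq : L' i j ^ 2 = bseq j.val / bseq (j.val + 1) := by
        have hX : L' i j ^ 2 = (1 / ((j.val : ℝ) + 1)) ^ 2
            / (bseq (j.val + 1) / (((j.val : ℝ) + 1) ^ 2 * bseq j.val)) :=
          (eq_div_iff hne).mpr hsq
        rw [hX]
        field_simp
      have hfin : L' i j = Real.sqrt (L' i j ^ 2) := (Real.sqrt_sq hLpos.le).symm
      rw [hfin, hLsq, hij]
      norm_num
    · -- |c - 1| → 1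
      have h3 := (tendsto_c.sub (tendsto_const_nhds : Filter.Tendsto
        (fun _ : ℕ => (1 : ℝ)) Filter.atTop (nhds 1))).abs
      simpa using h3
end

section
/- Let A be a real symmetric positive definite n×n matrix and B = A⁻¹. Fix a lower triangular sparsity pattern S ⊆ {(i,j) : 1 ≤ j ≤ i ≤ n} containing all diagonal pairs (j,j). For each column j let s⁽ʲ⁾ = (s₁ = j < s₂ < … < s_{k_j}) be the rows i with (i,j) ∈ S, let B_j be the k_j×k_j principal submatrix of B with rows and columns s⁽ʲ⁾, and let v_j = B_j⁻¹ e₁ where e₁ is the first standard basis vector of ℝ^{k_j}. Then (v_j)₁ > 0 for every j, and the lower triangular matrix L defined by placing the values ((v_j)₁)^{−1/2} v_j in the positions s⁽ʲ⁾ of column j (and zeros elsewhere) has positive diagonal and minimizes the K-condition number K(Lᵀ A⁻¹ L) = (Tr(Lᵀ A⁻¹ L)/n)/(det(Lᵀ A⁻¹ L))^{1/n} over all lower triangular matrices with positive diagonal whose nonzero entries lie in S. -/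
open Matrix

lemma mySum_off {n : ℕ} {j : Fin n} {S : Finset (Fin n × Fin n)} (g : Fin n → ℝ)
    (h0 : ∀ i, (i, j) ∉ S → g i = 0) :
    ∑ k : {i : Fin n // (i, j) ∈ S}, g k = ∑ i, g i := by
  classical
  rw [← Finset.sum_subtype (Finset.univ.filter (fun i => (i, j) ∈ S)) (by simp) g]
  exact Finset.sum_subset (Finset.filter_subset _ _)
    (fun i _ hi => h0 i (by simpa using hi))

lemma myQuadRestrict {n : ℕ} {j : Fin n} {S : Finset (Fin n × Fin n)}
    (M : Matrix (Fin n) (Fin n) ℝ) (x : Fin n → ℝ)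
    (hx : ∀ i, (i, j) ∉ S → x i = 0) :
    (fun k : {i : Fin n // (i, j) ∈ S} => x k) ⬝ᵥ
      (M.submatrix (fun k : {i : Fin n // (i, j) ∈ S} => (k : Fin n))
        (fun k : {i : Fin n // (i, j) ∈ S} => (k : Fin n))) *ᵥ
      (fun k : {i : Fin n // (i, j) ∈ S} => x k) = x ⬝ᵥ M *ᵥ x := by
  classical
  simp only [dotProduct, mulVec, submatrix_apply]
  rw [← mySum_off (j := j) (S := S) (fun i => x i * ∑ l, M i l * x l)
    (fun i hi => by simp [hx i hi])]
  apply Finset.sum_congr rfl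
  intro k _
  congr 1
  exact mySum_off (j := j) (S := S) (fun l => M k l * x l)
    (fun l hl => by simp [hx l hl])

lemma myPosDefSub {n : ℕ} {j : Fin n} {S : Finset (Fin n × Fin n)}
    {M : Matrix (Fin n) (Fin n) ℝ} (hM : M.PosDef) :
    (M.submatrix (fun k : {i : Fin n // (i, j) ∈ S} => (k : Fin n))
      (fun k : {i : Fin n // (i, j) ∈ S} => (k : Fin n))).PosDef := by
  classical
  refine Matrix.PosDef.of_dotProduct_mulVec_pos ?_ ?_
  · ext k l
    simp only [conjTranspose_apply, submatrix_apply, star_trivial]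
    have := hM.isHermitian
    rw [← this.apply l k]
    simp [conjTranspose_apply]
  · intro x hx
    set y : Fin n → ℝ := fun i => if h : (i, j) ∈ S then x ⟨i, h⟩ else 0 with hy
    have hy0 : ∀ i, (i, j) ∉ S → y i = 0 := fun i h => dif_neg h
    have hxy : ∀ k : {i : Fin n // (i, j) ∈ S}, y k = x k := fun k => dif_pos k.2
    have hyne : y ≠ 0 := by
      intro h
      apply hx
      funext k
      have := congrFun h (k : Fin n)
      rw [hxy k] at this
      simpa using this
    have hpos := hM.dotProduct_mulVec_pos hyne
    have hq := myQuadRestrict (j := j) (S := S) M y hy0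
    simp only [star_trivial] at hpos ⊢
    have : (fun k : {i : Fin n // (i, j) ∈ S} => y k) = x := funext hxy
    rw [← this, hq]
    exact hpos

lemma myCS {m : Type*} [Fintype m] {M : Matrix m m ℝ} (hpd : M.PosDef)
    (u x : m → ℝ) :
    (u ⬝ᵥ M *ᵥ x) ^ 2 ≤ (u ⬝ᵥ M *ᵥ u) * (x ⬝ᵥ M *ᵥ x) := by
  have hsym : Mᵀ = M := by
    have := hpd.isHermitian
    rw [← conjTranspose_eq_transpose_of_trivial]
    exact this
  have hxu : x ⬝ᵥ M *ᵥ u = u ⬝ᵥ M *ᵥ x := by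
    conv_lhs => rw [dotProduct_mulVec, ← hsym, vecMul_transpose]
    exact dotProduct_comm _ _
  have hpsd : ∀ z : m → ℝ, 0 ≤ z ⬝ᵥ M *ᵥ z := by
    intro z
    have := hpd.posSemidef.dotProduct_mulVec_nonneg z
    simpa using this
  set a := u ⬝ᵥ M *ᵥ u
  set b := u ⬝ᵥ M *ᵥ x
  set c := x ⬝ᵥ M *ᵥ x
  have key : ∀ t : ℝ, 0 ≤ a * (t * t) + (2 * b) * t + c := by
    intro t
    have h := hpsd (x + t • u)
    have hexp : (x + t • u) ⬝ᵥ M *ᵥ (x + t • u) = a * (t * t) + (2 * b) * t + c := by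
      simp only [mulVec_add, mulVec_smul, dotProduct_add, add_dotProduct,
        dotProduct_smul, smul_dotProduct, smul_eq_mul]
      rw [hxu]
      ring
    rw [hexp] at h
    exact h
  have hd := discrim_le_zero key
  rw [discrim] at hd
  nlinarith [hd]

lemma myTrace {n : ℕ} (B N : Matrix (Fin n) (Fin n) ℝ) :
    (Nᵀ * B * N).trace = ∑ j, (fun i => N i j) ⬝ᵥ B *ᵥ (fun i => N i j) := by
  simp only [Matrix.trace, Matrix.diag, mul_apply, transpose_apply, dotProduct, mulVec,
    Finset.sum_mul, Finset.mul_sum]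
  apply Finset.sum_congr rfl
  intro j _
  rw [Finset.sum_comm]
  apply Finset.sum_congr rfl
  intro i _
  apply Finset.sum_congr rfl
  intro k _
  ring

lemma myDet {n : ℕ} (B N : Matrix (Fin n) (Fin n) ℝ)
    (hN : ∀ i j : Fin n, i < j → N i j = 0) :
    (Nᵀ * B * N).det = (∏ i, N i i) ^ 2 * B.det := by
  have hdetN : N.det = ∏ i, N i i := by
    apply det_of_lowerTriangular
    intro i j hij
    exact hN i j (by simpa using hij)
  rw [det_mul, det_mul, det_transpose, hdetN]
  ring


/-- The K-condition number `K(M) = (Tr(M)/n)/(det M)^{1/n}` of an `n × n` matrix. -/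
noncomputable def Kcond (n : ℕ) (M : Matrix (Fin n) (Fin n) ℝ) : ℝ :=
  (M.trace / n) / M.det ^ ((1 : ℝ) / n)

/-- Let `A` be SPD, `B = A⁻¹`, and `S` a lower triangular sparsity pattern
containing the diagonal. For each column `j`, let `B_j` be the principal submatrix of `B`
indexed by the rows `i` with `(i, j) ∈ S` (whose first index is `s₁ = j`, the smallest),
and `v_j = B_j⁻¹ e₁` where `e₁` is the standard basis vector at position `j`. Then
`(v_j)₁ > 0` for every `j`, the lower triangular matrix `L` with column `j` equal to
`((v_j)₁)^{-1/2} v_j` on the positions of `S` (zero elsewhere) has positive diagonal, and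
`L` minimizes the K-condition number `K(Lᵀ A⁻¹ L)` over all lower triangular matrices with
positive diagonal whose nonzero entries lie in `S`. -/
theorem stmt_15 (n : ℕ) (hn : 0 < n) (A : Matrix (Fin n) (Fin n) ℝ)
    (hAs : A.IsSymm) (hApd : A.PosDef)
    (B : Matrix (Fin n) (Fin n) ℝ) (hB : B = A⁻¹)
    (S : Finset (Fin n × Fin n))
    (hlow : ∀ p ∈ S, p.2 ≤ p.1)
    (hdiag : ∀ j : Fin n, (j, j) ∈ S)
    (v : (j : Fin n) → ({i : Fin n // (i, j) ∈ S} → ℝ))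
    (hv : ∀ j : Fin n,
      v j = (B.submatrix (fun k : {i : Fin n // (i, j) ∈ S} => (k : Fin n))
              (fun k : {i : Fin n // (i, j) ∈ S} => (k : Fin n)))⁻¹ *ᵥ
            Pi.single ⟨j, hdiag j⟩ 1)
    (L : Matrix (Fin n) (Fin n) ℝ)
    (hL : ∀ i j : Fin n, L i j =
      if h : (i, j) ∈ S then (Real.sqrt (v j ⟨j, hdiag j⟩))⁻¹ * v j ⟨i, h⟩ else 0) :
    (∀ j : Fin n, 0 < v j ⟨j, hdiag j⟩) ∧
    (∀ i : Fin n, 0 < L i i) ∧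
    (∀ L' : Matrix (Fin n) (Fin n) ℝ,
      (∀ i j : Fin n, (i, j) ∉ S → L' i j = 0) →
      (∀ i : Fin n, 0 < L' i i) →
      Kcond n (Lᵀ * A⁻¹ * L) ≤ Kcond n (L'ᵀ * A⁻¹ * L')) := by
  classical
  have hBpd : B.PosDef := hB ▸ hApd.inv
  have hAinvB : A⁻¹ = B := hB.symm
  rw [hAinvB]
  have hnR : (0 : ℝ) < (n : ℝ) := by exact_mod_cast hn
  -- per-column facts
  have hBjpd : ∀ j : Fin n,
      (B.submatrix (fun k : {i : Fin n // (i, j) ∈ S} => (k : Fin n))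
        (fun k : {i : Fin n // (i, j) ∈ S} => (k : Fin n))).PosDef :=
    fun j => myPosDefSub hBpd
  have hBv : ∀ j : Fin n,
      (B.submatrix (fun k : {i : Fin n // (i, j) ∈ S} => (k : Fin n))
        (fun k : {i : Fin n // (i, j) ∈ S} => (k : Fin n))) *ᵥ v j
      = Pi.single ⟨j, hdiag j⟩ 1 := by
    intro j
    rw [hv j, mulVec_mulVec, mul_nonsing_inv _ (hBjpd j).det_pos.ne'.isUnit, one_mulVec]
  have hvdot : ∀ (j : Fin n) (x : {i : Fin n // (i, j) ∈ S} → ℝ),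
      v j ⬝ᵥ (B.submatrix (fun k : {i : Fin n // (i, j) ∈ S} => (k : Fin n))
        (fun k : {i : Fin n // (i, j) ∈ S} => (k : Fin n))) *ᵥ x = x ⟨j, hdiag j⟩ := by
    intro j x
    have hsym : (B.submatrix (fun k : {i : Fin n // (i, j) ∈ S} => (k : Fin n))
        (fun k : {i : Fin n // (i, j) ∈ S} => (k : Fin n)))ᵀ
        = B.submatrix (fun k : {i : Fin n // (i, j) ∈ S} => (k : Fin n))
            (fun k : {i : Fin n // (i, j) ∈ S} => (k : Fin n)) := by
      rw [← conjTranspose_eq_transpose_of_trivial]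
      exact (hBjpd j).isHermitian
    conv_lhs => rw [dotProduct_mulVec, ← hsym, vecMul_transpose, hBv j]
    rw [single_dotProduct, one_mul]
  have hvv : ∀ j : Fin n,
      v j ⬝ᵥ (B.submatrix (fun k : {i : Fin n // (i, j) ∈ S} => (k : Fin n))
        (fun k : {i : Fin n // (i, j) ∈ S} => (k : Fin n))) *ᵥ v j = v j ⟨j, hdiag j⟩ :=
    fun j => hvdot j (v j)
  have hvne : ∀ j : Fin n, v j ≠ 0 := by
    intro j h
    have h2 := hBv j
    rw [h, mulVec_zero] at h2
    have := congrFun h2 ⟨j, hdiag j⟩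
    simp at this
  have hvpos : ∀ j : Fin n, 0 < v j ⟨j, hdiag j⟩ := by
    intro j
    have h := (hBjpd j).dotProduct_mulVec_pos (hvne j)
    simp only [star_trivial] at h
    rwa [hvv j] at h
  have hLjj : ∀ i : Fin n, L i i = Real.sqrt (v i ⟨i, hdiag i⟩) := by
    intro i
    rw [hL i i, dif_pos (hdiag i)]
    have ha := hvpos i
    have hs : Real.sqrt (v i ⟨i, hdiag i⟩) ≠ 0 := (Real.sqrt_pos.mpr ha).ne'
    field_simp
    rw [Real.sq_sqrt ha.le]
  have hLdiag : ∀ i : Fin n, 0 < L i i := by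
    intro i
    rw [hLjj i]
    exact Real.sqrt_pos.mpr (hvpos i)
  have hLpat : ∀ i j : Fin n, (i, j) ∉ S → L i j = 0 := fun i j h => by
    rw [hL i j, dif_neg h]
  refine ⟨hvpos, hLdiag, ?_⟩
  -- general column lower bound
  have hcol : ∀ (N : Matrix (Fin n) (Fin n) ℝ), (∀ i j : Fin n, (i, j) ∉ S → N i j = 0) →
      ∀ j : Fin n, (N j j) ^ 2 / (v j ⟨j, hdiag j⟩)
        ≤ (fun i => N i j) ⬝ᵥ B *ᵥ (fun i => N i j) := by
    intro N hNp j
    have hq := myQuadRestrict (j := j) (S := S) B (fun i => N i j)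
      (fun i hi => hNp i j hi)
    rw [← hq]
    have hcs := myCS (hBjpd j) (v j) (fun k : {i : Fin n // (i, j) ∈ S} => N k j)
    rw [hvdot j _, hvv j] at hcs
    rw [div_le_iff₀ (hvpos j)]
    calc (N j j) ^ 2
        = ((fun k : {i : Fin n // (i, j) ∈ S} => N k j) ⟨j, hdiag j⟩) ^ 2 := rfl
      _ ≤ v j ⟨j, hdiag j⟩ * ((fun k : {i : Fin n // (i, j) ∈ S} => N k j) ⬝ᵥ
            (B.submatrix (fun k : {i : Fin n // (i, j) ∈ S} => (k : Fin n))
              (fun k : {i : Fin n // (i, j) ∈ S} => (k : Fin n))) *ᵥ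
            (fun k : {i : Fin n // (i, j) ∈ S} => N k j)) := hcs
      _ = _ := mul_comm _ _
  -- exact value for L's columns
  have hLcol : ∀ j : Fin n, (fun i => L i j) ⬝ᵥ B *ᵥ (fun i => L i j) = 1 := by
    intro j
    have hq := myQuadRestrict (j := j) (S := S) B (fun i => L i j)
      (fun i hi => hLpat i j hi)
    rw [← hq]
    have hxx : (fun k : {i : Fin n // (i, j) ∈ S} => L k j)
        = (Real.sqrt (v j ⟨j, hdiag j⟩))⁻¹ • v j := by
      funext k
      rw [hL k j, dif_pos k.2]
      rfl
    rw [hxx, smul_dotProduct, mulVec_smul, dotProduct_smul, hvv j]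
    simp only [smul_eq_mul]
    have ha := hvpos j
    have hs : Real.sqrt (v j ⟨j, hdiag j⟩) ≠ 0 := (Real.sqrt_pos.mpr ha).ne'
    rw [show (Real.sqrt (v j ⟨j, hdiag j⟩))⁻¹ * ((Real.sqrt (v j ⟨j, hdiag j⟩))⁻¹ *
        v j ⟨j, hdiag j⟩)
      = v j ⟨j, hdiag j⟩ / (Real.sqrt (v j ⟨j, hdiag j⟩) * Real.sqrt (v j ⟨j, hdiag j⟩))
        by ring]
    rw [Real.mul_self_sqrt ha.le, div_self ha.ne']
  intro L' hL'pat hL'diag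
  -- values for L
  have hTL : (Lᵀ * B * L).trace = (n : ℝ) := by
    rw [myTrace]
    simp [hLcol]
  have hDL : (Lᵀ * B * L).det = (∏ j, v j ⟨j, hdiag j⟩) * B.det := by
    rw [myDet B L (fun i j hij => hLpat i j (fun h => absurd (hlow _ h) (not_le.mpr hij)))]
    congr 1
    rw [← Finset.prod_pow]
    apply Finset.prod_congr rfl
    intro i _
    rw [hLjj i, Real.sq_sqrt (hvpos i).le]
  -- values for L'
  have hTN : ∑ j, (L' j j) ^ 2 / (v j ⟨j, hdiag j⟩) ≤ (L'ᵀ * B * L').trace := by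
    rw [myTrace]
    exact Finset.sum_le_sum (fun j _ => hcol L' hL'pat j)
  have hDN : (L'ᵀ * B * L').det = (∏ j, (L' j j) ^ 2) * B.det := by
    rw [myDet B L' (fun i j hij => hL'pat i j (fun h => absurd (hlow _ h) (not_le.mpr hij)))]
    rw [Finset.prod_pow]
  -- abbreviations
  set a : Fin n → ℝ := fun j => v j ⟨j, hdiag j⟩ with ha
  set d : Fin n → ℝ := fun j => L' j j with hd
  set t : Fin n → ℝ := fun j => (d j) ^ 2 / a j with ht
  have hapos : ∀ j, 0 < a j := hvpos
  have hdpos : ∀ j, 0 < d j := hL'diag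
  have htpos : ∀ j, 0 < t j := fun j => div_pos (pow_pos (hdpos j) 2) (hapos j)
  have hc : (0 : ℝ) < B.det := hBpd.det_pos
  have hX : (0 : ℝ) < (∏ j, a j) * B.det := mul_pos (Finset.prod_pos fun j _ => hapos j) hc
  have hY : (0 : ℝ) < (∏ j, (d j) ^ 2) * B.det :=
    mul_pos (Finset.prod_pos fun j _ => pow_pos (hdpos j) 2) hc
  have hYX : (∏ j, (d j) ^ 2) * B.det = (∏ j, t j) * ((∏ j, a j) * B.det) := by
    rw [← mul_assoc, ← Finset.prod_mul_distrib]
    congr 1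
    apply Finset.prod_congr rfl
    intro j _
    simp only [ht]
    rw [div_mul_cancel₀ _ (hapos j).ne']
  -- AM-GM
  have hAM : (∏ j, t j) ^ ((1 : ℝ) / n) ≤ (L'ᵀ * B * L').trace / n := by
    have h1 : ∏ j, t j ^ ((n : ℝ)⁻¹) ≤ ∑ j, ((n : ℝ)⁻¹) * t j := by
      apply Real.geom_mean_le_arith_mean_weighted
      · intro i _
        positivity
      · simp [Finset.card_univ]
        field_simp
      · intro i _
        exact (htpos i).le
    rw [Real.finset_prod_rpow Finset.univ t (fun i _ => (htpos i).le) _] at h1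
    rw [← Finset.mul_sum] at h1
    rw [one_div]
    calc (∏ j, t j) ^ ((n : ℝ)⁻¹) ≤ (n : ℝ)⁻¹ * ∑ j, t j := h1
      _ ≤ (n : ℝ)⁻¹ * (L'ᵀ * B * L').trace := by
          apply mul_le_mul_of_nonneg_left hTN (by positivity)
      _ = (L'ᵀ * B * L').trace / n := by rw [div_eq_inv_mul]
  -- conclude
  unfold Kcond
  rw [hTL, hDL, hDN]
  rw [div_self hnR.ne']
  rw [div_le_div_iff₀ (Real.rpow_pos_of_pos hX _) (Real.rpow_pos_of_pos hY _)]
  rw [one_mul, hYX, Real.mul_rpow (Finset.prod_nonneg fun j _ => (htpos j).le) hX.le]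
  exact mul_le_mul_of_nonneg_right hAM (Real.rpow_pos_of_pos hX _).le
end

section
/- Let u, v ∈ ℝⁿ with u_i v_i ≠ 0 for all i, and let T be the lower triangular n×n matrix with T_{ij} = u_i v_j for i ≥ j and T_{ij} = 0 for i < j. Then T is invertible and T⁻¹ is lower bidiagonal: (T⁻¹)_{ij} = 0 unless j = i or j = i−1. -/
open Matrix

/-- Explicit bidiagonal inverse of the rank-1 lower semiseparable matrix. -/
noncomputable def Bmat (n : ℕ) (u v : Fin n → ℝ) : Matrix (Fin n) (Fin n) ℝ :=
  fun i j => if i = j then 1 / (u i * v i)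
    else if (i : ℕ) = (j : ℕ) + 1 then -(1 / (u j * v i)) else 0

/-- Let `u, v ∈ ℝⁿ` with `u_i v_i ≠ 0` for all `i`, and let `T` be the lower
triangular matrix with `T_{ij} = u_i v_j` for `i ≥ j` and `T_{ij} = 0` for `i < j`. Then
`T` is invertible and `T⁻¹` is lower bidiagonal: `(T⁻¹)_{ij} = 0` unless `j = i` or
`j = i-1`. -/
theorem stmt_18 (n : ℕ) (u v : Fin n → ℝ) (huv : ∀ i : Fin n, u i * v i ≠ 0)
    (T : Matrix (Fin n) (Fin n) ℝ)
    (hT : ∀ i j : Fin n, T i j = if j ≤ i then u i * v j else 0) :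
    IsUnit T.det ∧
    ∀ i j : Fin n, i.val ≠ j.val → i.val ≠ j.val + 1 → T⁻¹ i j = 0 := by
  have hu : ∀ i, u i ≠ 0 := fun i => (mul_ne_zero_iff.mp (huv i)).1
  have hv : ∀ i, v i ≠ 0 := fun i => (mul_ne_zero_iff.mp (huv i)).2
  set B := Bmat n u v with hB
  have hTB : T * B = 1 := by
    ext i k
    rw [Matrix.mul_apply]
    by_cases hk : (k : ℕ) + 1 < n
    · set k' : Fin n := ⟨(k : ℕ) + 1, hk⟩ with hk'def
      have hkk' : k ≠ k' := by
        intro h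
        have := congrArg Fin.val h
        simp [hk'def] at this
      have hzero : ∀ j ∈ (Finset.univ : Finset (Fin n)),
          j ∉ ({k, k'} : Finset (Fin n)) → T i j * B j k = 0 := by
        intro j _ hj
        simp only [Finset.mem_insert, Finset.mem_singleton, not_or] at hj
        have h1 : j ≠ k := hj.1
        have h2 : (j : ℕ) ≠ (k : ℕ) + 1 := by
          intro h
          exact hj.2 (Fin.ext (by simp [hk'def, h]))
        simp [hB, Bmat, h1, h2]
      rw [← Finset.sum_subset (Finset.subset_univ {k, k'}) hzero,
        Finset.sum_pair hkk']
      have hBkk : B k k = 1 / (u k * v k) := by simp [hB, Bmat]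
      have hBk'k : B k' k = -(1 / (u k * v k')) := by
        simp [hB, Bmat, hk'def, hkk'.symm, Fin.ext_iff]
      have hTik : T i k = if k ≤ i then u i * v k else 0 := hT i k
      have hTik' : T i k' = if k' ≤ i then u i * v k' else 0 := hT i k'
      rw [hBkk, hBk'k, hTik, hTik', Matrix.one_apply]
      by_cases hik : i = k
      · subst hik
        have h2 : ¬ (k' ≤ i) := by
          simp [Fin.le_def, hk'def]
        simp [h2]
        field_simp
        rw [div_self (huv i)]
      · simp only [if_neg hik]
        by_cases hle : k ≤ i
        · have hlt : (k : ℕ) < (i : ℕ) := by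
            rcases lt_or_eq_of_le (Fin.le_def.mp hle) with h | h
            · exact h
            · exact absurd (Fin.ext h.symm) hik
          have hle' : k' ≤ i := by simpa [Fin.le_def, hk'def] using hlt
          simp only [if_pos hle, if_pos hle']
          field_simp
          rw [div_self (hv k), div_self (hv k')]
          ring
        · have hle' : ¬ (k' ≤ i) := by
            intro h
            exact hle (le_of_lt (lt_of_lt_of_le (by simp [Fin.lt_def, hk'def]) h))
          simp [hle, hle']
    · have hzero : ∀ j ∈ (Finset.univ : Finset (Fin n)),
          j ≠ k → T i j * B j k = 0 := by
        intro j _ hj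
        have h2 : (j : ℕ) ≠ (k : ℕ) + 1 := by
          intro h
          exact absurd (h ▸ j.isLt) hk
        simp [hB, Bmat, hj, h2]
      rw [Finset.sum_eq_single_of_mem k (Finset.mem_univ k) hzero]
      have hBkk : B k k = 1 / (u k * v k) := by simp [hB, Bmat]
      rw [hBkk, hT i k, Matrix.one_apply]
      by_cases hik : i = k
      · subst hik
        simp only [le_refl, if_pos, if_true]
        rw [one_div, mul_inv_eq_one₀ (huv i)]
      · have hle : ¬ (k ≤ i) := by
          intro h
          rcases lt_or_eq_of_le (Fin.le_def.mp h) with hlt | heq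
          · exact hk (lt_of_le_of_lt (Nat.succ_le_of_lt hlt) i.isLt)
          · exact hik (Fin.ext heq.symm)
        simp [hle, hik]
  refine ⟨Matrix.isUnit_det_of_right_inverse hTB, ?_⟩
  intro i j h1 h2
  rw [Matrix.inv_eq_right_inv hTB]
  simp [hB, Bmat, Fin.ext_iff, h1, h2]
end
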